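/- (L⁴ estimate with k-independent constant) Let g be a positive function on [R*, +∞) that is Lipschitz with constant L > 0, let R_{k+1} = R_k + g(R_k)/(2L) with R_0 ≥ R*, and set ω_k = {(x1, x2) : R_k < x1 < R_{k+1}, |x2| < g(x1)}. There exists a constant c, independent of k and u, such that for every continuously differentiable u on the closure of ω_k vanishing on the lateral boundaries {|x2| = g(x1)}: (∫_{ω_k} |u|⁴ dx)^{1/4} ≤ c·g(R_k)^{1/2}·(∫_{ω_k} |∇u|² dx)^{1/2}. -/

import Mathlib

/-- The slice `ω = {(x₁,x₂) : a < x₁ < b, |x₂| < g(x₁)}` of the outlet. -/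
def outletSlice (g : ℝ → ℝ) (a b : ℝ) : Set (ℝ × ℝ) :=
  {x : ℝ × ℝ | a < x.1 ∧ x.1 < b ∧ |x.2| < g x.1}

open MeasureTheory Set

/-- Cauchy–Schwarz for nonnegative functions. -/
lemma cs_helper {α : Type*} [MeasurableSpace α] (μ : Measure α) (f h : α → ℝ)
    (hf0 : ∀ x, 0 ≤ f x) (hh0 : ∀ x, 0 ≤ h x)
    (hf2 : Integrable (fun x => f x ^ 2) μ) (hh2 : Integrable (fun x => h x ^ 2) μ)
    (hfh : Integrable (fun x => f x * h x) μ) :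
    (∫ x, f x * h x ∂μ) ^ 2 ≤ (∫ x, f x ^ 2 ∂μ) * ∫ x, h x ^ 2 ∂μ := by
  set A := ∫ x, f x ^ 2 ∂μ with hA
  set B := ∫ x, h x ^ 2 ∂μ with hB
  set Z := ∫ x, f x * h x ∂μ with hZ
  have hA0 : 0 ≤ A := integral_nonneg fun x => sq_nonneg _
  have hB0 : 0 ≤ B := integral_nonneg fun x => sq_nonneg _
  have hZ0 : 0 ≤ Z := integral_nonneg fun x => mul_nonneg (hf0 x) (hh0 x)
  have key : ∀ ε : ℝ, 0 < ε → Z ≤ (ε * A + B / ε) / 2 := by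
    intro ε hε
    have hpt : ∀ x, f x * h x ≤ (ε * f x ^ 2 + h x ^ 2 / ε) / 2 := by
      intro x
      have h0 := sq_nonneg (ε * f x - h x)
      have hdiv : h x ^ 2 / ε * ε = h x ^ 2 := div_mul_cancel₀ _ (ne_of_gt hε)
      nlinarith [h0, hε, hdiv]
    calc Z ≤ ∫ x, (ε * f x ^ 2 + h x ^ 2 / ε) / 2 ∂μ := by
            exact integral_mono_ae hfh
              (((hf2.const_mul ε).add (hh2.div_const ε)).div_const 2)
              (Filter.Eventually.of_forall hpt)
      _ = (ε * A + B / ε) / 2 := by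
            rw [integral_div, integral_add (hf2.const_mul ε) (hh2.div_const ε),
              integral_const_mul, integral_div]
  have sq_key : ∀ δ : ℝ, 0 < δ → Z ^ 2 ≤ (A + δ) * (B + δ) := by
    intro δ hδ
    have hApos : 0 < A + δ := by linarith
    have hBpos : 0 < B + δ := by linarith
    set ε := Real.sqrt ((B + δ) / (A + δ)) with hε
    have hεpos : 0 < ε := Real.sqrt_pos.2 (div_pos hBpos hApos)
    have hε2 : ε ^ 2 = (B + δ) / (A + δ) := Real.sq_sqrt (div_pos hBpos hApos).le
    have h1 : Z ≤ (ε * A + B / ε) / 2 := key ε hεpos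
    set S := Real.sqrt ((A + δ) * (B + δ)) with hS
    have hS0 : 0 ≤ S := Real.sqrt_nonneg _
    have hS2 : S ^ 2 = (A + δ) * (B + δ) := Real.sq_sqrt (by positivity)
    have h2 : Z ≤ (ε * (A + δ) + (B + δ) / ε) / 2 := by
      have e1 : B / ε ≤ (B + δ) / ε := by
        apply (div_le_div_iff_of_pos_right hεpos).2; linarith
      have e2 : ε * A ≤ ε * (A + δ) := by
        apply mul_le_mul_of_nonneg_left (by linarith) hεpos.le
      linarith
    have h3 : ε * (A + δ) = S := by
      have e1 : (ε * (A + δ)) ^ 2 = S ^ 2 := by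
        rw [mul_pow, hε2, hS2]; field_simp
      calc ε * (A + δ) = Real.sqrt ((ε * (A + δ)) ^ 2) :=
            (Real.sqrt_sq (by positivity)).symm
        _ = Real.sqrt (S ^ 2) := by rw [e1]
        _ = S := Real.sqrt_sq hS0
    have h4 : (B + δ) / ε = S := by
      have e1 : ((B + δ) / ε) ^ 2 = S ^ 2 := by
        rw [div_pow, hε2, hS2]; field_simp
      calc (B + δ) / ε = Real.sqrt (((B + δ) / ε) ^ 2) :=
            (Real.sqrt_sq (by positivity)).symm
        _ = Real.sqrt (S ^ 2) := by rw [e1]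
        _ = S := Real.sqrt_sq hS0
    have h5 : Z ≤ S := by rw [h3, h4] at h2; linarith
    calc Z ^ 2 ≤ S ^ 2 := by nlinarith
      _ = (A + δ) * (B + δ) := hS2
  refine le_of_forall_pos_le_add fun δ hδ => ?_
  have hδ' : 0 < min 1 (δ / (A + B + 1)) := lt_min one_pos (by positivity)
  have := sq_key _ hδ'
  set d := min 1 (δ / (A + B + 1)) with hd
  have hd1 : d ≤ 1 := min_le_left _ _
  have hd2 : d ≤ δ / (A + B + 1) := min_le_right _ _
  have h6 : d * (A + B + 1) ≤ δ := by
    exact (le_div_iff₀ (by positivity)).1 hd2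
  nlinarith [this, hδ'.le, hd1, hA0, hB0]

/-- A function continuous on an open set, extended by zero, is measurable. -/
lemma measurable_indicator_contOn {X E : Type*} [TopologicalSpace X] [MeasurableSpace X]
    [OpensMeasurableSpace X] [TopologicalSpace E] [MeasurableSpace E] [BorelSpace E] [Zero E]
    {s : Set X} (hs : IsOpen s) {f : X → E} (hf : ContinuousOn f s) :
    Measurable (s.indicator f) := by
  apply measurable_of_isOpen
  intro V hV
  by_cases h0 : (0 : E) ∈ V
  · have : (s.indicator f) ⁻¹' V = (s ∩ f ⁻¹' V) ∪ sᶜ := by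
      ext x
      by_cases hx : x ∈ s <;> simp [Set.indicator, hx, h0]
    rw [this]
    exact (hf.isOpen_inter_preimage hs hV).measurableSet.union hs.isClosed_compl.measurableSet
  · have : (s.indicator f) ⁻¹' V = s ∩ f ⁻¹' V := by
      ext x
      by_cases hx : x ∈ s <;> simp [Set.indicator, hx, h0]
    rw [this]
    exact (hf.isOpen_inter_preimage hs hV).measurableSet

/-- Integrability of a bounded measurable function vanishing outside a finite measure set. -/
lemma integrable_of_bounded_support {α : Type*} [MeasurableSpace α] {μ : Measure α}
    {f : α → ℝ} (hm : AEStronglyMeasurable f μ) {s : Set α} (hs : MeasurableSet s)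
    (hμs : μ s ≠ ⊤) (M : ℝ) (hb : ∀ x, |f x| ≤ M) (h0 : ∀ x ∉ s, f x = 0) :
    Integrable f μ := by
  have hind : f = s.indicator f := by
    ext x
    by_cases hx : x ∈ s
    · simp [Set.indicator, hx]
    · simp [Set.indicator, hx, h0 x hx]
  rw [hind, integrable_indicator_iff hs]
  refine Integrable.mono' (g := fun _ => M) ?_ ?_ ?_
  · exact integrableOn_const hμs
  · exact hm.restrict
  · exact Filter.Eventually.of_forall fun x => (Real.norm_eq_abs _ ▸ hb x)

/-- Bounded a.e.-measurable functions are integrable on finite measure sets. -/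
lemma integrableOn_of_bounded' {α : Type*} [MeasurableSpace α] {μ : Measure α}
    {f : α → ℝ} {s : Set α} (hμs : μ s ≠ ⊤)
    (hm : AEStronglyMeasurable f (μ.restrict s)) (M : ℝ) (hb : ∀ x, |f x| ≤ M) :
    IntegrableOn f s μ := by
  refine Integrable.mono' (g := fun _ => M) ?_ hm ?_
  · exact integrableOn_const hμs
  · exact Filter.Eventually.of_forall fun x => (Real.norm_eq_abs _ ▸ hb x)

/-- A set integral equals the full integral when the function vanishes off the set. -/
lemma integral_eq_of_support {α : Type*} [MeasurableSpace α] (μ : Measure α) (s : Set α)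
    (hs : MeasurableSet s) (f : α → ℝ) (h0 : ∀ x ∉ s, f x = 0) :
    ∫ x in s, f x ∂μ = ∫ x, f x ∂μ := by
  rw [← MeasureTheory.integral_indicator hs]
  congr 1
  funext x
  by_cases hx : x ∈ s
  · rw [Set.indicator_of_mem hx]
  · rw [Set.indicator_of_notMem hx, h0 x hx]

/-- Fundamental theorem of calculus bound: `|f d - f c| ≤ ∫ φ` for `|f'| ≤ φ`. -/
lemma ftc_abs_bound (f f' φ : ℝ → ℝ) (c d : ℝ) (hcd : c < d)
    (hcont : ContinuousOn f (Set.Icc c d))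
    (hderiv : ∀ s ∈ Set.Ioo c d, HasDerivAt f (f' s) s)
    (hf'm : AEStronglyMeasurable f' (volume.restrict (Set.Ioo c d)))
    (hφ : IntegrableOn φ (Set.Ioo c d))
    (hbound : ∀ s ∈ Set.Ioo c d, |f' s| ≤ φ s) :
    |f d - f c| ≤ ∫ s in Set.Ioo c d, φ s := by
  have hf'int : IntegrableOn f' (Set.Ioo c d) := by
    refine hφ.mono' hf'm ?_
    rw [MeasureTheory.ae_restrict_iff' measurableSet_Ioo]
    exact Filter.Eventually.of_forall fun s hs => Real.norm_eq_abs _ ▸ hbound s hs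
  have hii : IntervalIntegrable f' volume c d :=
    (intervalIntegrable_iff_integrableOn_Ioo_of_le hcd.le).2 hf'int
  have ftc : ∫ y in c..d, f' y = f d - f c :=
    intervalIntegral.integral_eq_sub_of_hasDeriv_right_of_le hcd.le hcont
      (fun s hs => (hderiv s hs).hasDerivWithinAt) hii
  have habs : AEStronglyMeasurable (fun s => |f' s|) (volume.restrict (Set.Ioo c d)) :=
    hf'm.norm.congr (Filter.Eventually.of_forall fun x => Real.norm_eq_abs (f' x))
  rw [← ftc, intervalIntegral.integral_of_le hcd.le, integral_Ioc_eq_integral_Ioo]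
  calc |∫ s in Set.Ioo c d, f' s| ≤ ∫ s in Set.Ioo c d, |f' s| := by
        simpa [Real.norm_eq_abs] using
          norm_integral_le_integral_norm (μ := volume.restrict (Set.Ioo c d)) f'
    _ ≤ ∫ s in Set.Ioo c d, φ s := by
        refine integral_mono_ae (hf'int.abs) hφ ?_
        exact (ae_restrict_iff' measurableSet_Ioo).2
          (Filter.Eventually.of_forall fun s hs => hbound s hs)

/-- FTC bound for the square: `|f d ^ 2 - f c ^ 2| ≤ ∫ 2 |f| φ`. -/
lemma ftc_sq_bound (f f' φ : ℝ → ℝ) (c d : ℝ) (hcd : c < d)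
    (hcont : ContinuousOn f (Set.Icc c d))
    (hderiv : ∀ s ∈ Set.Ioo c d, HasDerivAt f (f' s) s)
    (hf'm : AEStronglyMeasurable f' (volume.restrict (Set.Ioo c d)))
    (hφ : IntegrableOn φ (Set.Ioo c d))
    (hbound : ∀ s ∈ Set.Ioo c d, |f' s| ≤ φ s)
    (hφ0 : ∀ s, 0 ≤ φ s) :
    |f d ^ 2 - f c ^ 2| ≤ ∫ s in Set.Ioo c d, 2 * |f s| * φ s := by
  obtain ⟨M, hM⟩ := (isCompact_Icc (a := c) (b := d)).exists_bound_of_continuousOn hcont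
  have hM0 : 0 ≤ M := le_trans (norm_nonneg _) (hM c (by simp [hcd.le]))
  have hfm : AEStronglyMeasurable f (volume.restrict (Set.Ioo c d)) :=
    (hcont.mono Set.Ioo_subset_Icc_self).aestronglyMeasurable measurableSet_Ioo
  have hint2 : IntegrableOn (fun s => 2 * |f s| * φ s) (Set.Ioo c d) := by
    have hfabs : AEStronglyMeasurable (fun s => |f s|) (volume.restrict (Set.Ioo c d)) :=
      hfm.norm.congr (Filter.Eventually.of_forall fun x => Real.norm_eq_abs (f x))
    refine (hφ.const_mul (2 * M)).mono' ((hfabs.const_mul 2).mul hφ.1) ?_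
    rw [MeasureTheory.ae_restrict_iff' measurableSet_Ioo]
    refine Filter.Eventually.of_forall fun s hs => ?_
    have h1 : |f s| ≤ M := Real.norm_eq_abs (f s) ▸ hM s (Set.Ioo_subset_Icc_self hs)
    have h2 : 0 ≤ φ s := hφ0 s
    rw [Real.norm_eq_abs, abs_of_nonneg (by positivity)]
    nlinarith
  refine ftc_abs_bound (fun s => f s ^ 2) (fun s => 2 * f s * f' s) _ c d hcd
    (hcont.pow 2) (fun s hs => ?_) ((hfm.const_mul 2).mul hf'm) hint2 (fun s hs => ?_)
  · have h := (hderiv s hs).fun_pow 2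
    simpa [mul_comm, mul_assoc, mul_left_comm] using h
  · have h1 := hbound s hs
    have h2 := abs_nonneg (f s)
    calc |2 * f s * f' s| = 2 * |f s| * |f' s| := by
          rw [abs_mul, abs_mul]; simp
      _ ≤ 2 * |f s| * φ s := by
          apply mul_le_mul_of_nonneg_left h1 (by positivity)

section Geometry

variable {L g₀ a b : ℝ} {g : ℝ → ℝ}

lemma omega_isOpen (hgc : Continuous g) : IsOpen (outletSlice g a b) := by
  have : outletSlice g a b =
      {x : ℝ × ℝ | a < x.1} ∩ ({x : ℝ × ℝ | x.1 < b} ∩ {x : ℝ × ℝ | |x.2| < g x.1}) := by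
    ext x; simp [outletSlice, and_assoc]
  rw [this]
  exact (isOpen_lt continuous_const continuous_fst).inter
    ((isOpen_lt continuous_fst continuous_const).inter
      (isOpen_lt continuous_snd.abs (hgc.comp continuous_fst)))

lemma closure_omega_subset (hgc : Continuous g) :
    closure (outletSlice g a b) ⊆ {p : ℝ × ℝ | a ≤ p.1 ∧ p.1 ≤ b ∧ |p.2| ≤ g p.1} := by
  apply closure_minimal
  · intro p hp
    exact ⟨hp.1.le, hp.2.1.le, hp.2.2.le⟩
  · refine IsClosed.inter (isClosed_le continuous_const continuous_fst) ?_
    exact IsClosed.inter (isClosed_le continuous_fst continuous_const)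
      (isClosed_le continuous_snd.abs (hgc.comp continuous_fst))

lemma omega_isCompact_closure (hgc : Continuous g) (hgub : ∀ t, g t ≤ 3/2*g₀) :
    IsCompact (closure (outletSlice g a b)) := by
  refine IsCompact.of_isClosed_subset
    ((isCompact_Icc (a := a) (b := b)).prod
      (isCompact_Icc (a := -(3/2*g₀)) (b := 3/2*g₀))) isClosed_closure ?_
  intro p hp
  obtain ⟨h1, h2, h3⟩ := closure_omega_subset hgc hp
  have := abs_le.1 (h3.trans (hgub p.1))
  exact ⟨⟨h1, h2⟩, this.1, this.2⟩

lemma omega_volume_ne_top (hgc : Continuous g) (hgub : ∀ t, g t ≤ 3/2*g₀) :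
    volume (outletSlice g a b) ≠ ⊤ := by
  refine ne_of_lt (lt_of_le_of_lt (measure_mono subset_closure) ?_)
  exact (omega_isCompact_closure hgc hgub).measure_lt_top

lemma omega_uniqueDiffOn (hL : 0 < L) (hg₀ : 0 < g₀) (hab : a < b)
    (hba : b - a = g₀ / (2*L)) (hgc : Continuous g)
    (hg_lip : ∀ s t, |g s - g t| ≤ L * |s - t|)
    (hglb : ∀ t, g₀/2 ≤ g t) :
    UniqueDiffOn ℝ (closure (outletSlice g a b)) := by
  intro x hx
  obtain ⟨hx1, hx2, hx3⟩ := closure_omega_subset hgc hx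
  obtain ⟨ρ, hρpos, hρ1, hρ2⟩ : ∃ ρ : ℝ, 0 < ρ ∧ ρ ≤ g₀ / (8*(1+L)) ∧ ρ ≤ (b-a)/4 :=
    ⟨min (g₀ / (8*(1+L))) ((b-a)/4), lt_min (by positivity) (by linarith [hab]),
      min_le_left _ _, min_le_right _ _⟩
  have hy : ∃ y : ℝ × ℝ, y = ((a+b)/2, 0) := ⟨_, rfl⟩
  obtain ⟨y, hy⟩ := hy
  set K : Set (ℝ × ℝ) := convexHull ℝ (insert x (Metric.ball y ρ)) with hK
  have hball : (Metric.ball y ρ).Nonempty := Metric.nonempty_ball.2 hρpos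
  have hKsub : K ⊆ closure (outletSlice g a b) := by
    clear_value K
    rw [hK, convexHull_insert hball, (convex_ball y ρ).convexHull_eq]
    intro z hz
    rw [mem_convexJoin] at hz
    obtain ⟨p, hp, w, hw, hseg⟩ := hz
    rw [Set.mem_singleton_iff] at hp
    rw [hp] at hseg
    rw [segment_eq_image] at hseg
    obtain ⟨θ, hθ, rfl⟩ := hseg
    obtain ⟨hθ0, hθ1⟩ := hθ
    rcases eq_or_lt_of_le hθ0 with hθz | hθpos
    · simpa [← hθz] using hx
    -- now show the point is in ω itself
    apply subset_closure
    have hd := Metric.mem_ball.1 hw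
    rw [hy, Prod.dist_eq, sup_lt_iff] at hd
    have hw1 : |w.1 - (a+b)/2| < ρ := by
      have := hd.1
      rwa [Real.dist_eq] at this
    have hw2 : |w.2| < ρ := by
      have := hd.2
      rw [Real.dist_eq] at this
      simpa using this
    have hz1 : ((1-θ) • x + θ • w).1 = (1-θ)*x.1 + θ*w.1 := rfl
    have hz2 : ((1-θ) • x + θ • w).2 = (1-θ)*x.2 + θ*w.2 := rfl
    have hw1' : (a+b)/2 - ρ < w.1 ∧ w.1 < (a+b)/2 + ρ := by
      constructor <;> [linarith [abs_lt.1 hw1 |>.1]; linarith [abs_lt.1 hw1 |>.2]]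
    refine ⟨?_, ?_, ?_⟩
    · -- a < z1
      rw [hz1]
      nlinarith [hw1'.1, hθ1, hθpos, hρ2, hx1, hab]
    · -- z1 < b
      rw [hz1]
      nlinarith [hw1'.2, hθ1, hθpos, hρ2, hx2, hab]
    · -- |z2| < g z1
      rw [hz1, hz2]
      have hgz : g x.1 - L * |((1-θ)*x.1 + θ*w.1) - x.1| ≤ g ((1-θ)*x.1 + θ*w.1) := by
        have h2 := (abs_le.1 (hg_lip x.1 ((1-θ)*x.1 + θ*w.1))).2
        have hcomm : |x.1 - ((1-θ)*x.1 + θ*w.1)| = |((1-θ)*x.1 + θ*w.1) - x.1| :=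
          abs_sub_comm _ _
        rw [hcomm] at h2
        linarith
      have habs1 : |((1-θ)*x.1 + θ*w.1) - x.1| = θ * |w.1 - x.1| := by
        rw [show ((1-θ)*x.1 + θ*w.1) - x.1 = θ * (w.1 - x.1) by ring, abs_mul,
          abs_of_nonneg hθ0]
      have habsw : |w.1 - x.1| ≤ ρ + (b-a)/2 := by
        have h1 : |w.1 - (a+b)/2| < ρ := hw1
        have h2 : |x.1 - (a+b)/2| ≤ (b-a)/2 := by
          rw [abs_le]; constructor <;> linarith
        calc |w.1 - x.1| ≤ |w.1 - (a+b)/2| + |(a+b)/2 - x.1| := abs_sub_le _ _ _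
          _ ≤ ρ + (b-a)/2 := by
              rw [abs_sub_comm ((a+b)/2) x.1]; linarith
      have hz2abs : |(1-θ)*x.2 + θ*w.2| ≤ (1-θ) * g x.1 + θ * ρ := by
        calc |(1-θ)*x.2 + θ*w.2| ≤ |(1-θ)*x.2| + |θ*w.2| := abs_add_le _ _
          _ = (1-θ)*|x.2| + θ*|w.2| := by
              rw [abs_mul, abs_mul, abs_of_nonneg (by linarith : (0:ℝ) ≤ 1-θ),
                abs_of_nonneg hθ0]
          _ ≤ (1-θ) * g x.1 + θ * ρ := by
              have := hw2.le
              have h1 : (0:ℝ) ≤ 1 - θ := by linarith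
              nlinarith
      have hLba : L * (b - a) = g₀ / 2 := by
        rw [hba]; field_simp
      have hglbx : g₀/2 ≤ g x.1 := hglb x.1
      have hρ1' : ρ * (8*(1+L)) ≤ g₀ := by
        have h8 : (0:ℝ) < 8*(1+L) := by positivity
        exact (le_div_iff₀ h8).1 hρ1
      have e1 : ρ + L*ρ ≤ g₀/8 := by linarith [hρ1']
      have hmain : ρ + L*ρ + L*((b-a)/2) < g x.1 := by linarith [e1, hLba, hglbx]
      have hmain2 := mul_lt_mul_of_pos_left hmain hθpos
      calc |(1-θ)*x.2 + θ*w.2| ≤ (1-θ) * g x.1 + θ * ρ := hz2abs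
        _ < g x.1 - L * (θ * (ρ + (b-a)/2)) := by linarith [hmain2]
        _ ≤ g x.1 - L * |((1-θ)*x.1 + θ*w.1) - x.1| := by
            rw [habs1]
            have h3 : θ * |w.1 - x.1| ≤ θ * (ρ + (b-a)/2) :=
              mul_le_mul_of_nonneg_left habsw hθ0
            have h4 := mul_le_mul_of_nonneg_left h3 hL.le
            linarith
        _ ≤ g ((1-θ)*x.1 + θ*w.1) := hgz
  have hconv : Convex ℝ K := convex_convexHull ℝ _
  have hint : (interior K).Nonempty := by
    refine Nonempty.mono (interior_mono (subset_trans (Set.subset_insert _ _)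
      (subset_convexHull ℝ _)) : interior (Metric.ball y ρ) ⊆ interior K) ?_
    rw [Metric.isOpen_ball.interior_eq]
    exact hball
  have hxK : x ∈ K := subset_convexHull ℝ _ (Set.mem_insert _ _)
  exact (uniqueDiffWithinAt_convex hconv hint (subset_closure hxK)).mono hKsub

end Geometry

section KeyLemma

set_option maxHeartbeats 1000000 in
/-- The core estimate on a single slice. -/
lemma key_lemma (L g₀ a b : ℝ) (g : ℝ → ℝ) (u : ℝ × ℝ → ℝ)
    (hL : 0 < L) (hg₀ : 0 < g₀) (hab : a < b) (hba : b - a = g₀ / (2*L))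
    (hgc : Continuous g) (hg_lip : ∀ s t, |g s - g t| ≤ L * |s - t|)
    (hglb : ∀ t, g₀/2 ≤ g t) (hgub : ∀ t, g t ≤ 3/2*g₀)
    (hu : ContDiffOn ℝ 1 u (closure (outletSlice g a b)))
    (hvan : ∀ x1 ∈ Set.Icc a b, u (x1, g x1) = 0 ∧ u (x1, -(g x1)) = 0) :
    (∫ x in outletSlice g a b, u x ^ 4) ≤
      (108*L+36) * g₀^2 *
        (∫ x in outletSlice g a b,
          ‖fderivWithin ℝ u (closure (outletSlice g a b)) x‖^2)^2 := by
  set ω := outletSlice g a b with hωdef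
  set cl := closure ω with hcl
  -- basic facts about ω
  have hωopen : IsOpen ω := omega_isOpen hgc
  have hωmeas : MeasurableSet ω := hωopen.measurableSet
  have hvolω : volume ω ≠ ⊤ := omega_volume_ne_top (g₀ := g₀) hgc hgub
  have hcompact : IsCompact cl := omega_isCompact_closure (g₀ := g₀) hgc hgub
  have hUD : UniqueDiffOn ℝ cl :=
    omega_uniqueDiffOn hL hg₀ hab hba hgc hg_lip hglb
  have hucl : ContinuousOn u cl := hu.continuousOn
  have hDcont : ContinuousOn (fderivWithin ℝ u cl) cl :=
    hu.continuousOn_fderivWithin hUD le_rfl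
  obtain ⟨Mu, hMu⟩ := hcompact.exists_bound_of_continuousOn hucl
  obtain ⟨KD, hKD⟩ := hcompact.exists_bound_of_continuousOn hDcont
  have hMu0 : 0 ≤ Mu ∧ 0 ≤ KD := by
    have hne : ((a+b)/2, 0) ∈ ω := by
      refine ⟨by simp; linarith, by simp; linarith, ?_⟩
      · simp only [abs_zero]; linarith [hglb ((a+b)/2)]
    constructor
    · exact le_trans (norm_nonneg _) (hMu _ (subset_closure hne))
    · exact le_trans (norm_nonneg _) (hKD _ (subset_closure hne))
  have hgpos : ∀ t, 0 < g t := fun t => lt_of_lt_of_le (by linarith) (hglb t)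
  -- inside ω, u is differentiable and D agrees with fderiv
  have hclnhds : ∀ x ∈ ω, cl ∈ nhds x := by
    intro x hx
    exact Filter.mem_of_superset (hωopen.mem_nhds hx) subset_closure
  have hDeq : ∀ x ∈ ω, fderivWithin ℝ u cl x = fderiv ℝ u x := by
    intro x hx
    exact fderivWithin_of_mem_nhds (hclnhds x hx)
  have hdiff : ∀ x ∈ ω, HasFDerivAt u (fderiv ℝ u x) x := by
    intro x hx
    exact (((hu x (subset_closure hx)).contDiffAt (hclnhds x hx)).differentiableAt
      one_ne_zero).hasFDerivAt
  have hfdb : ∀ x ∈ ω, ‖fderiv ℝ u x‖ ≤ KD := by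
    intro x hx
    rw [← hDeq x hx]
    exact hKD x (subset_closure hx)
  have hub : ∀ x ∈ ω, |u x| ≤ Mu := by
    intro x hx
    exact (Real.norm_eq_abs (u x)) ▸ hMu x (subset_closure hx)
  -- the zero extensions
  set W := ω.indicator u with hW
  set Φ := ω.indicator (fun x => ‖fderiv ℝ u x‖) with hΦ
  have hWmeas : Measurable W := measurable_indicator_contOn hωopen (hucl.mono subset_closure)
  have hΦmeas : Measurable Φ := ((measurable_fderiv ℝ u).norm).indicator hωmeas
  have hΦ0 : ∀ x, 0 ≤ Φ x := fun x => Set.indicator_nonneg (fun y _ => norm_nonneg _) x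
  have hWb : ∀ x, |W x| ≤ Mu := by
    intro x
    rw [hW]
    by_cases hx : x ∈ ω
    · rw [Set.indicator_of_mem hx]; exact hub x hx
    · rw [Set.indicator_of_notMem hx]; simpa using hMu0.1
  have hΦb : ∀ x, |Φ x| ≤ KD := by
    intro x
    rw [hΦ]
    by_cases hx : x ∈ ω
    · rw [Set.indicator_of_mem hx, abs_of_nonneg (norm_nonneg _)]; exact hfdb x hx
    · rw [Set.indicator_of_notMem hx]; simpa using hMu0.2
  have hW0 : ∀ x ∉ ω, W x = 0 := fun x hx => Set.indicator_of_notMem hx u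
  have hΦzero : ∀ x ∉ ω, Φ x = 0 := fun x hx => Set.indicator_of_notMem hx _
  have hWω : ∀ x ∈ ω, W x = u x := fun x hx => Set.indicator_of_mem hx u
  have hΦω : ∀ x ∈ ω, Φ x = ‖fderiv ℝ u x‖ := fun x hx => Set.indicator_of_mem hx _
  -- global integrability on ℝ²
  have hIW2 : Integrable (fun x => W x ^ 2) volume := by
    refine integrable_of_bounded_support ((hWmeas.pow_const 2).aestronglyMeasurable)
      hωmeas hvolω (Mu^2) (fun x => ?_) (fun x hx => by rw [hW0 x hx]; ring)
    rw [abs_pow]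
    exact pow_le_pow_left₀ (abs_nonneg _) (hWb x) 2
  have hIΦ2 : Integrable (fun x => Φ x ^ 2) volume := by
    refine integrable_of_bounded_support ((hΦmeas.pow_const 2).aestronglyMeasurable)
      hωmeas hvolω (KD^2) (fun x => ?_) (fun x hx => by rw [hΦzero x hx]; ring)
    rw [abs_pow]
    exact pow_le_pow_left₀ (abs_nonneg _) (hΦb x) 2
  have hIWΦ : Integrable (fun x => |W x| * Φ x) volume := by
    refine integrable_of_bounded_support ((hWmeas.abs.mul hΦmeas).aestronglyMeasurable)
      hωmeas hvolω (Mu*KD) (fun x => ?_) (fun x hx => by rw [hW0 x hx]; simp)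
    rw [abs_mul, abs_abs, abs_of_nonneg (hΦ0 x)]
    exact mul_le_mul (hWb x) ((abs_of_nonneg (hΦ0 x)) ▸ hΦb x) (hΦ0 x)
      (le_trans (abs_nonneg _) (hWb x))
  have hIF : Integrable (fun x => 2 * |W x| * Φ x) volume := by
    have : (fun x => 2 * |W x| * Φ x) = (fun x => 2 * (|W x| * Φ x)) := by
      funext x; ring
    rw [this]
    exact hIWΦ.const_mul 2
  have hIW4 : Integrable (fun x => W x ^ 4) volume := by
    refine integrable_of_bounded_support ((hWmeas.pow_const 4).aestronglyMeasurable)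
      hωmeas hvolω (Mu^4) (fun x => ?_) (fun x hx => by rw [hW0 x hx]; ring)
    rw [abs_pow]
    exact pow_le_pow_left₀ (abs_nonneg _) (hWb x) 4
  -- main scalar quantities
  set T := ∫ x, Φ x ^ 2 with hT
  set Y := ∫ x, W x ^ 2 with hY
  set Z := ∫ x, |W x| * Φ x with hZ
  have hT0 : 0 ≤ T := integral_nonneg fun x => sq_nonneg _
  have hY0 : 0 ≤ Y := integral_nonneg fun x => sq_nonneg _
  have hZ0 : 0 ≤ Z := integral_nonneg fun x => mul_nonneg (abs_nonneg _) (hΦ0 x)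
  -- identification with set integrals in the statement
  have hTeq : ∫ x in ω, ‖fderivWithin ℝ u cl x‖^2 = T := by
    rw [hT]
    have h1 : (fun x => Φ x ^ 2) = ω.indicator (fun x => ‖fderiv ℝ u x‖^2) := by
      funext x
      by_cases hx : x ∈ ω
      · rw [hΦω x hx, Set.indicator_of_mem hx]
      · rw [hΦzero x hx, Set.indicator_of_notMem hx]; ring
    rw [h1, integral_indicator hωmeas]
    refine (setIntegral_congr_fun hωmeas fun x hx => ?_).symm
    rw [hDeq x hx]
  have hU4eq : ∫ x in ω, u x ^ 4 = ∫ x, W x ^ 4 := by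
    have h1 : (fun x => W x ^ 4) = ω.indicator (fun x => u x ^ 4) := by
      funext x
      by_cases hx : x ∈ ω
      · rw [hWω x hx, Set.indicator_of_mem hx]
      · rw [hW0 x hx, Set.indicator_of_notMem hx]; ring
    rw [h1, integral_indicator hωmeas]
  -- Fubini helpers
  have fub1 : ∀ h : ℝ × ℝ → ℝ, Integrable h volume →
      (∫ x1 : ℝ, ∫ t : ℝ, h (x1, t)) = ∫ z, h z := by
    intro h hh
    rw [Measure.volume_eq_prod ℝ ℝ] at hh
    rw [show (volume : Measure (ℝ×ℝ)) = (volume : Measure ℝ).prod volume from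
      Measure.volume_eq_prod ℝ ℝ, MeasureTheory.integral_prod h hh]
  have fub2 : ∀ h : ℝ × ℝ → ℝ, Integrable h volume →
      (∫ x2 : ℝ, ∫ s : ℝ, h (s, x2)) = ∫ z, h z := by
    intro h hh
    rw [← fub1 h hh]
    rw [Measure.volume_eq_prod ℝ ℝ] at hh
    exact (integral_integral_swap (f := fun x y => h (x, y)) hh).symm
  -- named auxiliary functions
  set F := fun z : ℝ × ℝ => 2 * |W z| * Φ z with hFdef
  set G := fun z : ℝ × ℝ => W z ^ 2 with hGdef
  set P := fun z : ℝ × ℝ => Φ z ^ 2 with hPdef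
  have hIFF : Integrable F volume := hIF
  have hIG : Integrable G volume := hIW2
  have hIP : Integrable P volume := hIΦ2
  have hF0 : ∀ z, 0 ≤ F z := fun z => by
    rw [hFdef]
    exact mul_nonneg (by positivity) (hΦ0 z)
  have hG0 : ∀ z, 0 ≤ G z := fun z => sq_nonneg _
  have hP0 : ∀ z, 0 ≤ P z := fun z => sq_nonneg _
  have hFb : ∀ z, |F z| ≤ 2*Mu*KD := by
    intro z
    rw [hFdef, abs_of_nonneg (mul_nonneg (by positivity) (hΦ0 z))]
    have h1 := hWb z
    have h2 := (abs_of_nonneg (hΦ0 z)) ▸ hΦb z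
    nlinarith [abs_nonneg (W z), hΦ0 z, hMu0.1, hMu0.2]
  have hF00 : ∀ z ∉ ω, F z = 0 := fun z hz => by rw [hFdef]; simp [hW0 z hz]
  have hG00 : ∀ z ∉ ω, G z = 0 := fun z hz => by rw [hGdef]; simp [hW0 z hz]
  have hP00 : ∀ z ∉ ω, P z = 0 := fun z hz => by rw [hPdef]; simp [hΦzero z hz]
  have hGb : ∀ z, |G z| ≤ Mu^2 := fun z => by
    rw [hGdef, abs_pow]; exact pow_le_pow_left₀ (abs_nonneg _) (hWb z) 2
  have hPb : ∀ z, |P z| ≤ KD^2 := fun z => by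
    rw [hPdef, abs_pow]; exact pow_le_pow_left₀ (abs_nonneg _) (hΦb z) 2
  -- rows and columns are integrable
  have hbigIoo : volume (Ioo (-(3/2*g₀)) (3/2*g₀)) ≠ ⊤ := measure_Ioo_lt_top.ne
  have habIoo : volume (Ioo a b) ≠ ⊤ := measure_Ioo_lt_top.ne
  have hsuppv : ∀ x1 t : ℝ, (x1, t) ∉ ω ∨ t ∈ Ioo (-(3/2*g₀)) (3/2*g₀) := by
    intro x1 t
    by_cases h : (x1, t) ∈ ω
    · right
      have := h.2.2
      have h2 := abs_lt.1 (lt_of_lt_of_le this (hgub x1))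
      exact ⟨h2.1, h2.2⟩
    · exact Or.inl h
  have hsupph : ∀ s x2 : ℝ, (s, x2) ∉ ω ∨ s ∈ Ioo a b := by
    intro s x2
    by_cases h : (s, x2) ∈ ω
    · exact Or.inr ⟨h.1, h.2.1⟩
    · exact Or.inl h
  have hrowInt : ∀ (q : ℝ × ℝ → ℝ) (Mq : ℝ), Measurable q → (∀ z, |q z| ≤ Mq) →
      (∀ z ∉ ω, q z = 0) →
      (∀ x1 : ℝ, Integrable (fun t => q (x1, t)) volume) ∧
        (∀ x2 : ℝ, Integrable (fun s => q (s, x2)) volume) := by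
    intro q Mq hqm hqb hq0
    constructor
    · intro x1
      refine integrable_of_bounded_support
        ((hqm.comp (measurable_const.prodMk measurable_id)).aestronglyMeasurable)
        measurableSet_Ioo hbigIoo Mq (fun t => hqb _) (fun t ht => ?_)
      rcases hsuppv x1 t with h | h
      · exact hq0 _ h
      · exact absurd h ht
    · intro x2
      refine integrable_of_bounded_support
        ((hqm.comp (measurable_id.prodMk measurable_const)).aestronglyMeasurable)
        measurableSet_Ioo habIoo Mq (fun s => hqb _) (fun s hs => ?_)
      rcases hsupph s x2 with h | h
      · exact hq0 _ h
      · exact absurd h hs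
  have hFmeas : Measurable F := by
    rw [hFdef]; exact (hWmeas.abs.const_mul 2).mul hΦmeas
  have hGmeas : Measurable G := by rw [hGdef]; exact hWmeas.pow_const 2
  have hPmeas : Measurable P := by rw [hPdef]; exact hΦmeas.pow_const 2
  have hFrow := hrowInt F (2*Mu*KD) hFmeas hFb hF00
  have hΦrow := hrowInt Φ KD hΦmeas hΦb hΦzero
  have hGrow := hrowInt G (Mu^2) hGmeas hGb hG00
  have hProw := hrowInt P (KD^2) hPmeas hPb hP00
  -- segments in the closure
  have hseg_v : ∀ x1 ∈ Ioo a b, ∀ t, -(g x1) ≤ t → t ≤ g x1 → (x1, t) ∈ cl := by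
    intro x1 hx1 t ht1 ht2
    have hsub : ({x1} ×ˢ Ioo (-(g x1)) (g x1) : Set (ℝ × ℝ)) ⊆ ω := by
      rintro ⟨s1, s2⟩ ⟨hs1, hs2⟩
      simp only [mem_singleton_iff] at hs1
      subst hs1
      exact ⟨hx1.1, hx1.2, abs_lt.2 ⟨hs2.1, hs2.2⟩⟩
    have h1 : closure ({x1} ×ˢ Ioo (-(g x1)) (g x1) : Set (ℝ × ℝ))
        = {x1} ×ˢ Icc (-(g x1)) (g x1) := by
      rw [closure_prod_eq, closure_singleton,
        closure_Ioo (by linarith [hgpos x1] : -(g x1) ≠ g x1)]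
    have h2 : ({x1} ×ˢ Icc (-(g x1)) (g x1) : Set (ℝ × ℝ)) ⊆ cl := by
      rw [← h1]; exact closure_mono hsub
    exact h2 ⟨rfl, ht1, ht2⟩
  have hseg_h : ∀ c d x2 : ℝ, c < d → (∀ s ∈ Ioo c d, (s, x2) ∈ ω) →
      ∀ s ∈ Icc c d, (s, x2) ∈ cl := by
    intro c d x2 hcd hsub s hs
    have hsub' : (Ioo c d ×ˢ {x2} : Set (ℝ × ℝ)) ⊆ ω := by
      rintro ⟨s1, s2⟩ ⟨hs1, hs2⟩
      simp only [mem_singleton_iff] at hs2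
      subst hs2
      exact hsub s1 hs1
    have h1 : closure (Ioo c d ×ˢ {x2} : Set (ℝ × ℝ)) = Icc c d ×ˢ {x2} := by
      rw [closure_prod_eq, closure_singleton, closure_Ioo hcd.ne]
    have h2 : (Icc c d ×ˢ {x2} : Set (ℝ × ℝ)) ⊆ cl := by
      rw [← h1]; exact closure_mono hsub'
    exact h2 ⟨hs, rfl⟩
  -- the three pointwise claims
  -- common vertical-line facts
  have hvert : ∀ x1 x2 : ℝ, (x1, x2) ∈ ω →
      (ContinuousOn (fun t => u (x1, t)) (Icc x2 (g x1)) ∧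
       (∀ t ∈ Ioo x2 (g x1), HasDerivAt (fun t => u (x1, t))
          ((fderiv ℝ u (x1, t)) (0, 1)) t) ∧
       AEStronglyMeasurable (fun t => (fderiv ℝ u (x1, t)) (0, 1))
          (volume.restrict (Ioo x2 (g x1))) ∧
       (∀ t ∈ Ioo x2 (g x1), |(fderiv ℝ u (x1, t)) (0, 1)| ≤ Φ (x1, t))) := by
    intro x1 x2 hx
    obtain ⟨hxa, hxb, hxg⟩ := hx
    have hgt : -(g x1) < x2 := (abs_lt.1 hxg).1
    have hmem : ∀ t ∈ Ioo x2 (g x1), (x1, t) ∈ ω := by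
      intro t ht
      exact ⟨hxa, hxb, abs_lt.2 ⟨by linarith [ht.1], ht.2⟩⟩
    refine ⟨?_, ?_, ?_, ?_⟩
    · refine hucl.comp ((continuous_const.prodMk continuous_id).continuousOn) ?_
      intro t ht
      exact hseg_v x1 ⟨hxa, hxb⟩ t (by linarith [ht.1]) ht.2
    · intro t ht
      exact (hdiff _ (hmem t ht)).comp_hasDerivAt t
        ((hasDerivAt_const t x1).prodMk (hasDerivAt_id t))
    · have h1 : Measurable (fun t : ℝ => fderiv ℝ u (x1, t)) :=
        (measurable_fderiv ℝ u).comp (measurable_const.prodMk measurable_id)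
      exact (((ContinuousLinearMap.apply ℝ ℝ
        ((0:ℝ),(1:ℝ))).continuous.measurable.comp h1).aestronglyMeasurable).restrict
    · intro t ht
      rw [hΦω _ (hmem t ht)]
      calc |(fderiv ℝ u (x1, t)) (0, 1)|
          ≤ ‖fderiv ℝ u (x1, t)‖ * ‖((0:ℝ),(1:ℝ))‖ := by
            rw [← Real.norm_eq_abs]
            exact (fderiv ℝ u (x1, t)).le_opNorm _
        _ = ‖fderiv ℝ u (x1, t)‖ := by
            rw [Prod.norm_def]
            norm_num
  have claimV : ∀ x ∈ ω, u x ^ 2 ≤ ∫ t : ℝ, F (x.1, t) := by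
    rintro ⟨x1, x2⟩ hx
    obtain ⟨hc, hd, hm, hb⟩ := hvert x1 x2 hx
    obtain ⟨hxa, hxb, hxg⟩ := hx
    have hlt : x2 < g x1 := (abs_lt.1 hxg).2
    have hgt : -(g x1) < x2 := (abs_lt.1 hxg).1
    have hmem : ∀ t ∈ Ioo x2 (g x1), (x1, t) ∈ ω := by
      intro t ht
      exact ⟨hxa, hxb, abs_lt.2 ⟨by linarith [ht.1], ht.2⟩⟩
    have hφint : IntegrableOn (fun t => Φ (x1, t)) (Ioo x2 (g x1)) volume :=
      (hΦrow.1 x1).integrableOn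
    have key := ftc_sq_bound (fun t => u (x1, t)) (fun t => (fderiv ℝ u (x1, t)) (0, 1))
      (fun t => Φ (x1, t)) x2 (g x1) hlt hc hd hm hφint hb (fun t => hΦ0 _)
    have hvan1 : u (x1, g x1) = 0 := (hvan x1 ⟨hxa.le, hxb.le⟩).1
    rw [hvan1] at key
    have habs : |(0:ℝ) ^ 2 - u (x1, x2) ^ 2| = u (x1, x2) ^ 2 := by
      simp [abs_of_nonneg (sq_nonneg (u (x1, x2)))]
    rw [habs] at key
    have hcongr : (∫ t in Ioo x2 (g x1), 2 * |u (x1, t)| * Φ (x1, t))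
        = ∫ t in Ioo x2 (g x1), F (x1, t) := by
      refine setIntegral_congr_fun measurableSet_Ioo fun t ht => ?_
      rw [hFdef]
      simp only
      rw [hWω _ (hmem t ht)]
    have hext : (∫ t in Ioo x2 (g x1), F (x1, t)) ≤ ∫ t : ℝ, F (x1, t) :=
      setIntegral_le_integral (hFrow.1 x1)
        (Filter.Eventually.of_forall fun t => hF0 _)
    calc u ((x1, x2) : ℝ × ℝ) ^ 2 ≤ ∫ t in Ioo x2 (g x1), 2 * |u (x1, t)| * Φ (x1, t) := key
      _ = ∫ t in Ioo x2 (g x1), F (x1, t) := hcongr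
      _ ≤ ∫ t : ℝ, F (x1, t) := hext
  have claimP : ∀ x ∈ ω, u x ^ 2 ≤ (3*g₀) * ∫ t : ℝ, P (x.1, t) := by
    rintro ⟨x1, x2⟩ hx
    obtain ⟨hc, hd, hm, hb⟩ := hvert x1 x2 hx
    obtain ⟨hxa, hxb, hxg⟩ := hx
    have hlt : x2 < g x1 := (abs_lt.1 hxg).2
    have hgt : -(g x1) < x2 := (abs_lt.1 hxg).1
    have hgx : 0 < g x1 := hgpos x1
    have hφint : IntegrableOn (fun t => Φ (x1, t)) (Ioo x2 (g x1)) volume :=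
      (hΦrow.1 x1).integrableOn
    have key := ftc_abs_bound (fun t => u (x1, t)) (fun t => (fderiv ℝ u (x1, t)) (0, 1))
      (fun t => Φ (x1, t)) x2 (g x1) hlt hc hd hm hφint hb
    have hvan1 : u (x1, g x1) = 0 := (hvan x1 ⟨hxa.le, hxb.le⟩).1
    rw [hvan1] at key
    have habs : |(0:ℝ) - u (x1, x2)| = |u (x1, x2)| := by
      rw [zero_sub, abs_neg]
    rw [habs] at key
    have hsub : Ioo x2 (g x1) ⊆ Ioo (-(g x1)) (g x1) :=
      Ioo_subset_Ioo hgt.le le_rfl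
    have hmono : (∫ t in Ioo x2 (g x1), Φ (x1, t)) ≤ ∫ t in Ioo (-(g x1)) (g x1), Φ (x1, t) := by
      refine setIntegral_mono_set ((hΦrow.1 x1).integrableOn) ?_ (HasSubset.Subset.eventuallyLE hsub)
      exact Filter.Eventually.of_forall fun t => hΦ0 _
    -- Cauchy–Schwarz on the interval
    have hcs := cs_helper (volume.restrict (Ioo (-(g x1)) (g x1)))
      (fun t => Φ (x1, t)) (fun _ => (1:ℝ)) (fun t => hΦ0 _) (fun _ => zero_le_one)
      ((hProw.1 x1).integrableOn.congr_fun (fun t _ => by rw [hPdef]) measurableSet_Ioo)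
      ((integrableOn_const measure_Ioo_lt_top.ne).congr_fun
        (fun t _ => (one_pow 2).symm) measurableSet_Ioo)
      (((hΦrow.1 x1).integrableOn).congr_fun (fun t _ => (mul_one _).symm) measurableSet_Ioo)
    simp only [mul_one] at hcs
    have hvol : (∫ _t in Ioo (-(g x1)) (g x1), (1:ℝ) ^ 2) = 2 * g x1 := by
      simp only [one_pow]
      rw [setIntegral_const, measureReal_def, Real.volume_Ioo, smul_eq_mul, mul_one,
        ENNReal.toReal_ofReal (by linarith)]
      ring
    rw [hvol] at hcs
    have hP1 : (∫ t in Ioo (-(g x1)) (g x1), Φ (x1, t) ^ 2) ≤ ∫ t : ℝ, P (x1, t) := by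
      have h1 : (∫ t in Ioo (-(g x1)) (g x1), Φ (x1, t) ^ 2)
          = ∫ t in Ioo (-(g x1)) (g x1), P (x1, t) := by
        refine setIntegral_congr_fun measurableSet_Ioo fun t _ => ?_
        rw [hPdef]
      rw [h1]
      exact setIntegral_le_integral (hProw.1 x1)
        (Filter.Eventually.of_forall fun t => hP0 _)
    have hP0' : (0:ℝ) ≤ ∫ t : ℝ, P (x1, t) := integral_nonneg fun t => hP0 _
    have h2g : 2 * g x1 ≤ 3 * g₀ := by linarith [hgub x1]
    have hIΦnn : (0:ℝ) ≤ ∫ t in Ioo x2 (g x1), Φ (x1, t) :=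
      setIntegral_nonneg measurableSet_Ioo fun t _ => hΦ0 _
    have hsq : u ((x1, x2) : ℝ × ℝ) ^ 2 ≤ (∫ t in Ioo (-(g x1)) (g x1), Φ (x1, t)) ^ 2 := by
      rw [← sq_abs (u (x1, x2))]
      refine pow_le_pow_left₀ (abs_nonneg _) (le_trans key hmono) 2
    have hIoonn : (0:ℝ) ≤ ∫ t in Ioo (-(g x1)) (g x1), Φ (x1, t) ^ 2 :=
      setIntegral_nonneg measurableSet_Ioo fun t _ => sq_nonneg _
    calc u ((x1, x2) : ℝ × ℝ) ^ 2
        ≤ (∫ t in Ioo (-(g x1)) (g x1), Φ (x1, t)) ^ 2 := hsq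
      _ ≤ (∫ t in Ioo (-(g x1)) (g x1), Φ (x1, t) ^ 2) * (2 * g x1) := hcs
      _ ≤ (∫ t : ℝ, P (x1, t)) * (3 * g₀) := by
          exact mul_le_mul hP1 h2g (by linarith [hgx]) hP0'
      _ = (3*g₀) * ∫ t : ℝ, P (x1, t) := by ring
  have hhoriz : ∀ x1 x2 s : ℝ, (s, x2) ∈ ω →
      HasDerivAt (fun s => u (s, x2)) ((fderiv ℝ u (s, x2)) (1, 0)) s := by
    intro x1 x2 s hs
    exact (hdiff _ hs).comp_hasDerivAt s ((hasDerivAt_id s).prodMk (hasDerivAt_const s x2))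
  have hhm : ∀ (x2 : ℝ) (I : Set ℝ), MeasurableSet I →
      AEStronglyMeasurable (fun s => (fderiv ℝ u (s, x2)) (1, 0)) (volume.restrict I) := by
    intro x2 I _
    have h1 : Measurable (fun s : ℝ => fderiv ℝ u (s, x2)) :=
      (measurable_fderiv ℝ u).comp (measurable_id.prodMk measurable_const)
    exact (((ContinuousLinearMap.apply ℝ ℝ
      ((1:ℝ),(0:ℝ))).continuous.measurable.comp h1).aestronglyMeasurable).restrict
  have hhb : ∀ x2 s : ℝ, (s, x2) ∈ ω → |(fderiv ℝ u (s, x2)) (1, 0)| ≤ Φ (s, x2) := by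
    intro x2 s hs
    rw [hΦω _ hs]
    calc |(fderiv ℝ u (s, x2)) (1, 0)|
        ≤ ‖fderiv ℝ u (s, x2)‖ * ‖((1:ℝ),(0:ℝ))‖ := by
          rw [← Real.norm_eq_abs]
          exact (fderiv ℝ u (s, x2)).le_opNorm _
      _ = ‖fderiv ℝ u (s, x2)‖ := by
          rw [Prod.norm_def]
          norm_num
  have claimH : ∀ x ∈ ω, ∀ t ∈ Ioo a b, u x ^ 2 ≤ W (t, x.2) ^ 2 + ∫ s : ℝ, F (s, x.2) := by
    rintro ⟨x1, x2⟩ hx t ht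
    obtain ⟨hxa, hxb, hxg⟩ := hx
    simp only
    have hFnn : (0:ℝ) ≤ ∫ s : ℝ, F (s, x2) := integral_nonneg fun s => hF0 _
    rcases lt_trichotomy t x1 with hlt | heq | hgt
    · -- t < x1 : walk to the left
      set E : Set ℝ := {s ∈ Icc t x1 | g s ≤ |x2|} ∪ {t} with hE
      have hEne : E.Nonempty := ⟨t, Or.inr rfl⟩
      have hEbdd : BddAbove E := by
        refine ⟨x1, ?_⟩
        rintro s (⟨hs, _⟩ | hs)
        · exact hs.2
        · rw [hs]; exact hlt.le
      have hEclosed : IsClosed E := by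
        rw [hE]
        refine IsClosed.union ?_ isClosed_singleton
        have : {s ∈ Icc t x1 | g s ≤ |x2|} = Icc t x1 ∩ {s | g s ≤ |x2|} := rfl
        rw [this]
        exact isClosed_Icc.inter (isClosed_le hgc continuous_const)
      have hcE := hEclosed.csSup_mem hEne hEbdd
      set c := sSup E with hcdef
      have hct : t ≤ c := le_csSup hEbdd (Or.inr rfl)
      have hcx1 : c ≤ x1 := by
        refine csSup_le hEne ?_
        rintro s (⟨hs, _⟩ | hs)
        · exact hs.2
        · rw [hs]; exact hlt.le
      have hclt : c < x1 := by
        rcases lt_or_eq_of_le hcx1 with h | h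
        · exact h
        · exfalso
          rcases hcE with ⟨_, hgle⟩ | hceq
          · rw [h] at hgle; linarith [hxg, hgle]
          · rw [mem_singleton_iff] at hceq
            rw [h] at hceq; exact hlt.ne' hceq
      have hinter : ∀ s, c < s → s ≤ x1 → (s, x2) ∈ ω := by
        intro s hs1 hs2
        have hsa : a < s := lt_of_lt_of_le ht.1 (le_trans hct hs1.le)
        have hsb : s < b := lt_of_le_of_lt hs2 hxb
        have hgs : |x2| < g s := by
          by_contra hcon
          push_neg at hcon
          have hsE : s ∈ E := Or.inl ⟨⟨le_trans hct hs1.le, hs2⟩, hcon⟩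
          linarith [le_csSup hEbdd hsE]
        exact ⟨hsa, hsb, hgs⟩
      have hcont : ContinuousOn (fun s => u (s, x2)) (Icc c x1) := by
        refine hucl.comp ((continuous_id.prodMk continuous_const).continuousOn) ?_
        intro s hs
        exact hseg_h c x1 x2 hclt (fun s' hs' => hinter s' hs'.1 hs'.2.le) s hs
      have hφint : IntegrableOn (fun s => Φ (s, x2)) (Ioo c x1) volume :=
        (hΦrow.2 x2).integrableOn
      have key := ftc_sq_bound (fun s => u (s, x2))
        (fun s => (fderiv ℝ u (s, x2)) (1, 0)) (fun s => Φ (s, x2)) c x1 hclt hcont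
        (fun s hs => hhoriz x1 x2 s (hinter s hs.1 hs.2.le))
        (hhm x2 _ measurableSet_Ioo) hφint
        (fun s hs => hhb x2 s (hinter s hs.1 hs.2.le)) (fun s => hΦ0 _)
      have hkey2 : u (x1, x2) ^ 2 ≤ u (c, x2) ^ 2 +
          ∫ s in Ioo c x1, 2 * |u (s, x2)| * Φ (s, x2) := by
        have h5 := le_abs_self (u (x1, x2) ^ 2 - u (c, x2) ^ 2)
        linarith
      have hend : u (c, x2) ^ 2 ≤ W (t, x2) ^ 2 := by
        by_cases hgc2 : g c ≤ |x2|
        · have htd : Filter.Tendsto g (nhdsWithin c (Set.Ioi c)) (nhds (g c)) :=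
            (hgc.tendsto c).mono_left nhdsWithin_le_nhds
          have hev : ∀ᶠ s in nhdsWithin c (Set.Ioi c), |x2| ≤ g s := by
            filter_upwards [Ioc_mem_nhdsGT_of_mem ⟨le_refl c, hclt⟩] with s hs
            exact (hinter s hs.1 hs.2).2.2.le
          have hge : |x2| ≤ g c := ge_of_tendsto htd hev
          have hgeq : |x2| = g c := le_antisymm hge hgc2
          have hcIcc : c ∈ Icc a b :=
            ⟨le_of_lt (lt_of_lt_of_le ht.1 hct), le_of_lt (lt_of_le_of_lt hcx1 hxb)⟩
          have hv := hvan c hcIcc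
          have hz : u (c, x2) = 0 := by
            rcases (abs_eq (hgpos c).le).1 hgeq with h | h
            · rw [h]; exact hv.1
            · rw [h]; exact hv.2
          rw [hz]
          simp [sq_nonneg]
        · push_neg at hgc2
          have hceqt : c = t := by
            rcases hcE with ⟨_, hgle⟩ | hceq
            · linarith
            · exact hceq
          have hmem : (t, x2) ∈ ω := ⟨ht.1, ht.2, by rw [← hceqt]; exact hgc2⟩
          rw [hceqt, hWω _ hmem]
      have hcongr : (∫ s in Ioo c x1, 2 * |u (s, x2)| * Φ (s, x2))
          = ∫ s in Ioo c x1, F (s, x2) := by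
        refine setIntegral_congr_fun measurableSet_Ioo fun s hs => ?_
        rw [hFdef]
        simp only
        rw [hWω _ (hinter s hs.1 hs.2.le)]
      have hext : (∫ s in Ioo c x1, F (s, x2)) ≤ ∫ s : ℝ, F (s, x2) :=
        setIntegral_le_integral (hFrow.2 x2)
          (Filter.Eventually.of_forall fun s => hF0 _)
      linarith [hkey2, hend, hcongr ▸ hext]
    · -- t = x1
      have hmem : ((x1 : ℝ), x2) ∈ ω := ⟨hxa, hxb, hxg⟩
      rw [heq, hWω _ hmem]
      linarith
    · -- x1 < t : walk to the right
      set E : Set ℝ := {s ∈ Icc x1 t | g s ≤ |x2|} ∪ {t} with hE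
      have hEne : E.Nonempty := ⟨t, Or.inr rfl⟩
      have hEbdd : BddBelow E := by
        refine ⟨x1, ?_⟩
        rintro s (⟨hs, _⟩ | hs)
        · exact hs.1
        · rw [hs]; exact hgt.le
      have hEclosed : IsClosed E := by
        rw [hE]
        refine IsClosed.union ?_ isClosed_singleton
        have : {s ∈ Icc x1 t | g s ≤ |x2|} = Icc x1 t ∩ {s | g s ≤ |x2|} := rfl
        rw [this]
        exact isClosed_Icc.inter (isClosed_le hgc continuous_const)
      have hcE := hEclosed.csInf_mem hEne hEbdd
      set c := sInf E with hcdef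
      have hct : c ≤ t := csInf_le hEbdd (Or.inr rfl)
      have hcx1 : x1 ≤ c := by
        refine le_csInf hEne ?_
        rintro s (⟨hs, _⟩ | hs)
        · exact hs.1
        · rw [hs]; exact hgt.le
      have hclt : x1 < c := by
        rcases lt_or_eq_of_le hcx1 with h | h
        · exact h
        · exfalso
          rcases hcE with ⟨_, hgle⟩ | hceq
          · rw [← h] at hgle; linarith [hxg, hgle]
          · rw [mem_singleton_iff] at hceq
            rw [← h] at hceq; exact hgt.ne hceq
      have hinter : ∀ s, x1 ≤ s → s < c → (s, x2) ∈ ω := by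
        intro s hs1 hs2
        have hsa : a < s := lt_of_lt_of_le hxa hs1
        have hsb : s < b := lt_of_lt_of_le (lt_of_lt_of_le hs2 hct) ht.2.le
        have hgs : |x2| < g s := by
          by_contra hcon
          push_neg at hcon
          have hsE : s ∈ E := Or.inl ⟨⟨hs1, le_trans hs2.le hct⟩, hcon⟩
          linarith [csInf_le hEbdd hsE]
        exact ⟨hsa, hsb, hgs⟩
      have hcont : ContinuousOn (fun s => u (s, x2)) (Icc x1 c) := by
        refine hucl.comp ((continuous_id.prodMk continuous_const).continuousOn) ?_
        intro s hs
        exact hseg_h x1 c x2 hclt (fun s' hs' => hinter s' hs'.1.le hs'.2) s hs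
      have hφint : IntegrableOn (fun s => Φ (s, x2)) (Ioo x1 c) volume :=
        (hΦrow.2 x2).integrableOn
      have key := ftc_sq_bound (fun s => u (s, x2))
        (fun s => (fderiv ℝ u (s, x2)) (1, 0)) (fun s => Φ (s, x2)) x1 c hclt hcont
        (fun s hs => hhoriz x1 x2 s (hinter s hs.1.le hs.2))
        (hhm x2 _ measurableSet_Ioo) hφint
        (fun s hs => hhb x2 s (hinter s hs.1.le hs.2)) (fun s => hΦ0 _)
      have hkey2 : u (x1, x2) ^ 2 ≤ u (c, x2) ^ 2 +
          ∫ s in Ioo x1 c, 2 * |u (s, x2)| * Φ (s, x2) := by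
        have h5 := le_abs_self (u (x1, x2) ^ 2 - u (c, x2) ^ 2)
        have h6 := abs_sub_comm (u (c, x2) ^ 2) (u (x1, x2) ^ 2)
        rw [h6] at key
        linarith
      have hend : u (c, x2) ^ 2 ≤ W (t, x2) ^ 2 := by
        by_cases hgc2 : g c ≤ |x2|
        · have htd : Filter.Tendsto g (nhdsWithin c (Set.Iio c)) (nhds (g c)) :=
            (hgc.tendsto c).mono_left nhdsWithin_le_nhds
          have hev : ∀ᶠ s in nhdsWithin c (Set.Iio c), |x2| ≤ g s := by
            filter_upwards [Ico_mem_nhdsLT_of_mem ⟨hclt, le_refl c⟩] with s hs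
            exact (hinter s hs.1 hs.2).2.2.le
          have hge : |x2| ≤ g c := ge_of_tendsto htd hev
          have hgeq : |x2| = g c := le_antisymm hge hgc2
          have hcIcc : c ∈ Icc a b :=
            ⟨le_of_lt (lt_of_lt_of_le hxa hcx1), le_of_lt (lt_of_le_of_lt hct ht.2)⟩
          have hv := hvan c hcIcc
          have hz : u (c, x2) = 0 := by
            rcases (abs_eq (hgpos c).le).1 hgeq with h | h
            · rw [h]; exact hv.1
            · rw [h]; exact hv.2
          rw [hz]
          simp [sq_nonneg]
        · push_neg at hgc2
          have hceqt : c = t := by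
            rcases hcE with ⟨_, hgle⟩ | hceq
            · linarith
            · exact hceq
          have hmem : (t, x2) ∈ ω := ⟨ht.1, ht.2, by rw [← hceqt]; exact hgc2⟩
          rw [hceqt, hWω _ hmem]
      have hcongr : (∫ s in Ioo x1 c, 2 * |u (s, x2)| * Φ (s, x2))
          = ∫ s in Ioo x1 c, F (s, x2) := by
        refine setIntegral_congr_fun measurableSet_Ioo fun s hs => ?_
        rw [hFdef]
        simp only
        rw [hWω _ (hinter s hs.1.le hs.2)]
      have hext : (∫ s in Ioo x1 c, F (s, x2)) ≤ ∫ s : ℝ, F (s, x2) :=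
        setIntegral_le_integral (hFrow.2 x2)
          (Filter.Eventually.of_forall fun s => hF0 _)
      linarith [hkey2, hend, hcongr ▸ hext]
  -- averaged horizontal bound
  have hba' : 0 < b - a := by linarith
  have claimB : ∀ x ∈ ω,
      u x ^ 2 ≤ (1/(b-a)) * (∫ s : ℝ, G (s, x.2)) + ∫ s : ℝ, F (s, x.2) := by
    intro x hx
    have h1 : ∀ t ∈ Ioo a b, u x ^ 2 ≤ W (t, x.2) ^ 2 + ∫ s : ℝ, F (s, x.2) :=
      claimH x hx
    have hIc : IntegrableOn (fun _ : ℝ => u x ^ 2) (Ioo a b) volume :=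
      integrableOn_const habIoo
    have hIr : IntegrableOn (fun t : ℝ => W (t, x.2) ^ 2 + ∫ s : ℝ, F (s, x.2))
        (Ioo a b) volume := by
      have e1 : IntegrableOn (fun t : ℝ => W (t, x.2) ^ 2) (Ioo a b) volume := by
        have e2 : IntegrableOn (fun t : ℝ => G (t, x.2)) (Ioo a b) volume :=
          (hGrow.2 x.2).integrableOn
        refine e2.congr_fun (fun t _ => ?_) measurableSet_Ioo
        rw [hGdef]
      exact e1.add (integrableOn_const habIoo)
    have h2 := setIntegral_mono_on hIc hIr measurableSet_Ioo h1
    rw [setIntegral_const] at h2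
    rw [measureReal_def, Real.volume_Ioo, ENNReal.toReal_ofReal (by linarith)] at h2
    rw [integral_add ((hGrow.2 x.2).integrableOn)
      (integrableOn_const habIoo)] at h2
    rw [setIntegral_const, measureReal_def, Real.volume_Ioo, ENNReal.toReal_ofReal (by linarith)] at h2
    have h3 : ∫ t in Ioo a b, G (t, x.2) = ∫ s : ℝ, G (s, x.2) := by
      apply integral_eq_of_support volume (Ioo a b) measurableSet_Ioo
      intro t ht
      rcases hsupph t x.2 with h | h
      · exact hG00 _ h
      · exact absurd h ht
    have h3' : ∫ t in Ioo a b, W (t, x.2) ^ 2 = ∫ t in Ioo a b, G (t, x.2) := by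
      refine setIntegral_congr_fun measurableSet_Ioo fun t _ => ?_
      rw [hGdef]
    rw [h3', h3] at h2
    have hba'' : (0:ℝ) < b - a := by linarith
    have h4 : (b - a) * u x ^ 2 ≤ (∫ s : ℝ, G (s, x.2)) + (b - a) * (∫ s : ℝ, F (s, x.2)) := by
      rw [smul_eq_mul, smul_eq_mul] at h2
      nlinarith [h2]
    have hrhs : (b - a) * ((1/(b-a)) * (∫ s : ℝ, G (s, x.2)) + ∫ s : ℝ, F (s, x.2))
        = (∫ s : ℝ, G (s, x.2)) + (b - a) * ∫ s : ℝ, F (s, x.2) := by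
      field_simp
    nlinarith [h4, hrhs, hba'']
  -- marginal functions
  set Adef := fun x1 : ℝ => ∫ t : ℝ, F (x1, t) with hAdef
  set Bdef := fun x2 : ℝ => (1/(b-a)) * (∫ s : ℝ, G (s, x2)) + ∫ s : ℝ, F (s, x2) with hBdef
  have hA0 : ∀ x1, 0 ≤ Adef x1 := fun x1 => integral_nonneg fun t => hF0 _
  have hB0 : ∀ x2, 0 ≤ Bdef x2 := by
    intro x2
    have h1 : 0 ≤ ∫ s : ℝ, G (s, x2) := integral_nonneg fun s => hG0 _
    have h2 : 0 ≤ ∫ s : ℝ, F (s, x2) := integral_nonneg fun s => hF0 _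
    have h0 : 0 ≤ (1/(b-a)) := by positivity
    show 0 ≤ (1/(b-a)) * (∫ s : ℝ, G (s, x2)) + ∫ s : ℝ, F (s, x2)
    exact add_nonneg (mul_nonneg h0 h1) h2
  have hprod : (volume : Measure (ℝ × ℝ)) = (volume : Measure ℝ).prod volume :=
    Measure.volume_eq_prod ℝ ℝ
  have hIA : Integrable Adef volume := by
    rw [hAdef]
    have := hIFF
    rw [hprod] at this
    exact this.integral_prod_left
  have hIB : Integrable Bdef volume := by
    rw [hBdef]
    have h1 := hIG; rw [hprod] at h1
    have h2 := hIFF; rw [hprod] at h2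
    exact ((h1.integral_prod_right).const_mul _).add (h2.integral_prod_right)
  have claim4 : ∀ x ∈ ω, u x ^ 4 ≤ Adef x.1 * Bdef x.2 := by
    intro x hx
    have h1 := claimV x hx
    have h2 := claimB x hx
    have h3 : u x ^ 4 = u x ^ 2 * u x ^ 2 := by ring
    rw [h3]
    exact mul_le_mul h1 h2 (sq_nonneg _) (hA0 x.1)
  -- assembly
  have h4int : Integrable (fun x : ℝ × ℝ => Adef x.1 * Bdef x.2) volume := by
    rw [hprod]
    exact hIA.mul_prod hIB
  have hIu4ω : IntegrableOn (fun x => u x ^ 4) ω volume := by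
    refine (hIW4.integrableOn).congr_fun (fun x hx => ?_) hωmeas
    simp only [hWω x hx]
  have step1 : ∫ x in ω, u x ^ 4 ≤ ∫ x in ω, Adef x.1 * Bdef x.2 :=
    setIntegral_mono_on hIu4ω h4int.integrableOn hωmeas claim4
  have step2 : ∫ x in ω, Adef x.1 * Bdef x.2 ≤ ∫ x : ℝ × ℝ, Adef x.1 * Bdef x.2 :=
    setIntegral_le_integral h4int
      (Filter.Eventually.of_forall fun x => mul_nonneg (hA0 x.1) (hB0 x.2))
  have step3 : (∫ x : ℝ × ℝ, Adef x.1 * Bdef x.2) = (∫ x1, Adef x1) * ∫ x2, Bdef x2 := by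
    rw [hprod]
    exact integral_prod_mul Adef Bdef
  have stepA : (∫ x1, Adef x1) = 2 * Z := by
    rw [hAdef]
    rw [fub1 F hIFF]
    rw [hFdef, hZ]
    rw [show (fun z : ℝ × ℝ => 2 * |W z| * Φ z) = fun z : ℝ × ℝ => 2 * (|W z| * Φ z) by
      funext z; ring]
    exact integral_const_mul 2 _
  have stepBrow : (∫ x2, ∫ s : ℝ, F (s, x2)) = 2 * Z := by
    rw [fub2 F hIFF, hFdef, hZ]
    rw [show (fun z : ℝ × ℝ => 2 * |W z| * Φ z) = fun z : ℝ × ℝ => 2 * (|W z| * Φ z) by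
      funext z; ring]
    exact integral_const_mul 2 _
  have stepB : (∫ x2, Bdef x2) = (1/(b-a)) * Y + 2 * Z := by
    rw [hBdef]
    have h1 := hIG; rw [hprod] at h1
    have h2 := hIFF; rw [hprod] at h2
    rw [integral_add ((h1.integral_prod_right).const_mul _) (h2.integral_prod_right)]
    rw [integral_const_mul]
    rw [fub2 G hIG, stepBrow]
  -- Poincaré : Y ≤ 9 g₀² T
  have poincare : Y ≤ 9 * g₀^2 * T := by
    have hrowP : ∀ x1 : ℝ, (∫ t : ℝ, G (x1, t)) ≤ 9*g₀^2 * ∫ t : ℝ, P (x1, t) := by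
      intro x1
      have hPnn : (0:ℝ) ≤ ∫ t : ℝ, P (x1, t) := integral_nonneg fun t => hP0 _
      by_cases hx1 : x1 ∈ Ioo a b
      · have hsupp : ∀ t, t ∉ Ioo (-(g x1)) (g x1) → G (x1, t) = 0 := by
          intro t ht
          refine hG00 _ fun hmem' => ht ?_
          have := abs_lt.1 hmem'.2.2
          exact ⟨this.1, this.2⟩
        rw [← integral_eq_of_support volume (Ioo (-(g x1)) (g x1)) measurableSet_Ioo _ hsupp]
        have hpt : ∀ t ∈ Ioo (-(g x1)) (g x1), G (x1, t) ≤ 3*g₀ * ∫ τ : ℝ, P (x1, τ) := by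
          intro t ht
          have hmem : (x1, t) ∈ ω := ⟨hx1.1, hx1.2, abs_lt.2 ⟨ht.1, ht.2⟩⟩
          have h1 := claimP (x1, t) hmem
          have h2 : G (x1, t) = u (x1, t) ^ 2 := by
            rw [hGdef]
            simp only
            rw [hWω _ hmem]
          rw [h2]
          exact h1
        have hmono := setIntegral_mono_on ((hGrow.1 x1).integrableOn)
          (integrableOn_const measure_Ioo_lt_top.ne) measurableSet_Ioo hpt
        rw [setIntegral_const, measureReal_def, Real.volume_Ioo, smul_eq_mul,
          ENNReal.toReal_ofReal (by linarith [hgpos x1])] at hmono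
        have h2g : g x1 - -(g x1) = 2 * g x1 := by ring
        rw [h2g] at hmono
        calc (∫ t in Ioo (-(g x1)) (g x1), G (x1, t))
            ≤ 2 * g x1 * (3*g₀ * ∫ τ : ℝ, P (x1, τ)) := hmono
          _ ≤ 3 * g₀ * (3*g₀ * ∫ τ : ℝ, P (x1, τ)) := by
              have h3 : 2 * g x1 ≤ 3 * g₀ := by linarith [hgub x1]
              have h4 : (0:ℝ) ≤ 3*g₀ * ∫ τ : ℝ, P (x1, τ) := by positivity
              exact mul_le_mul_of_nonneg_right h3 h4
          _ = 9*g₀^2 * ∫ t : ℝ, P (x1, t) := by ring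
      · have hz : ∀ t : ℝ, G (x1, t) = 0 := by
          intro t
          exact hG00 _ fun hmem' => hx1 ⟨hmem'.1, hmem'.2.1⟩
        have : (∫ t : ℝ, G (x1, t)) = 0 := by
          simp [hz]
        rw [this]
        positivity
    have hYG : Y = ∫ z : ℝ × ℝ, G z := by rw [hY, hGdef]
    have hTP : T = ∫ z : ℝ × ℝ, P z := by rw [hT, hPdef]
    have hIGm : Integrable (fun x1 : ℝ => ∫ t : ℝ, G (x1, t)) volume := by
      have h1 := hIG; rw [hprod] at h1
      exact h1.integral_prod_left
    have hIPm : Integrable (fun x1 : ℝ => ∫ t : ℝ, P (x1, t)) volume := by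
      have h1 := hIP; rw [hprod] at h1
      exact h1.integral_prod_left
    calc Y = ∫ z : ℝ × ℝ, G z := hYG
      _ = ∫ x1 : ℝ, ∫ t : ℝ, G (x1, t) := (fub1 G hIG).symm
      _ ≤ ∫ x1 : ℝ, 9*g₀^2 * ∫ t : ℝ, P (x1, t) :=
          integral_mono hIGm (hIPm.const_mul _) hrowP
      _ = 9*g₀^2 * ∫ x1 : ℝ, ∫ t : ℝ, P (x1, t) := integral_const_mul _ _
      _ = 9*g₀^2 * ∫ z : ℝ × ℝ, P z := by rw [fub1 P hIP]
      _ = 9*g₀^2 * T := by rw [← hTP]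
  -- Cauchy–Schwarz : Z² ≤ Y * T
  have cs : Z ^ 2 ≤ Y * T := by
    have h1 : Integrable (fun x => |W x| ^ 2) volume :=
      hIW2.congr (Filter.Eventually.of_forall fun x => (sq_abs (W x)).symm)
    have h2 := cs_helper volume (fun x => |W x|) Φ (fun x => abs_nonneg _) hΦ0 h1 hIΦ2 hIWΦ
    have h3 : (∫ x : ℝ × ℝ, |W x| ^ 2) = Y := by
      rw [hY]
      congr 1
      funext x
      exact sq_abs _
    rw [h3] at h2
    exact h2
  have hZle : Z ≤ 3 * g₀ * T := by
    have h1 : Z ^ 2 ≤ (3 * g₀ * T) ^ 2 := by nlinarith [cs, poincare, hT0]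
    calc Z = Real.sqrt (Z ^ 2) := (Real.sqrt_sq hZ0).symm
      _ ≤ Real.sqrt ((3 * g₀ * T) ^ 2) := Real.sqrt_le_sqrt h1
      _ = 3 * g₀ * T := Real.sqrt_sq (by positivity)
  -- final arithmetic
  have hfrac : (1/(b-a)) = 2 * L / g₀ := by
    rw [hba]
    field_simp
  have final : ∫ x in ω, u x ^ 4 ≤ (108*L+36) * g₀^2 * T^2 := by
    have h1 : ∫ x in ω, u x ^ 4 ≤ (2 * Z) * ((1/(b-a)) * Y + 2 * Z) := by
      calc ∫ x in ω, u x ^ 4 ≤ ∫ x in ω, Adef x.1 * Bdef x.2 := step1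
        _ ≤ ∫ x : ℝ × ℝ, Adef x.1 * Bdef x.2 := step2
        _ = (∫ x1, Adef x1) * ∫ x2, Bdef x2 := step3
        _ = (2 * Z) * ((1/(b-a)) * Y + 2 * Z) := by rw [stepA, stepB]
    have h2 : (1/(b-a)) * Y ≤ (2 * L / g₀) * (9 * g₀^2 * T) := by
      rw [hfrac]
      exact mul_le_mul_of_nonneg_left poincare (by positivity)
    have h3 : (2 * L / g₀) * (9 * g₀^2 * T) = 18 * L * g₀ * T := by
      field_simp
      ring
    have h4 : (2 * Z) * ((1/(b-a)) * Y + 2 * Z) ≤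
        (2 * (3 * g₀ * T)) * ((18 * L * g₀ * T) + 2 * (3 * g₀ * T)) := by
      have hZ3 : 2 * Z ≤ 2 * (3 * g₀ * T) := by linarith
      have hsum : (1/(b-a)) * Y + 2 * Z ≤ 18 * L * g₀ * T + 2 * (3 * g₀ * T) := by
        rw [← h3]
        have := h2
        linarith
      refine mul_le_mul hZ3 hsum ?_ (by positivity)
      have hYnn : 0 ≤ (1/(b-a)) * Y := by positivity
      linarith
    have h5 : (2 * (3 * g₀ * T)) * ((18 * L * g₀ * T) + 2 * (3 * g₀ * T))
        = (108*L+36) * g₀^2 * T^2 := by ring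
    linarith
  rw [← hTeq] at final
  exact final

end KeyLemma

/-- Lemma 5.3 (`L⁴` estimate with `k`-independent constant): for a positive `L`-Lipschitz
`g` and the sequence `R_{k+1} = R_k + g(R_k)/(2L)`, there is a constant `c` independent of
`k` and `u` such that every `C¹` function `u` on the closure of
`ω_k = {R_k < x₁ < R_{k+1}, |x₂| < g(x₁)}` vanishing on the lateral boundaries satisfies
`‖u‖_{L⁴(ω_k)} ≤ c·g(R_k)^{1/2}·‖∇u‖_{L²(ω_k)}`. -/
theorem ladyzhenskaya_uniform_constant
    (Rstar L : ℝ) (g : ℝ → ℝ) (hL : 0 < L)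
    (hg_pos : ∀ t, Rstar ≤ t → 0 < g t)
    (hg_lip : ∀ t1 t2, Rstar ≤ t1 → Rstar ≤ t2 → |g t1 - g t2| ≤ L * |t1 - t2|)
    (R : ℕ → ℝ) (hR0 : Rstar ≤ R 0)
    (hRrec : ∀ j, R (j + 1) = R j + g (R j) / (2 * L)) :
    ∃ c : ℝ, 0 < c ∧
      ∀ (k : ℕ) (u : ℝ × ℝ → ℝ),
        ContDiffOn ℝ 1 u (closure (outletSlice g (R k) (R (k + 1)))) →
        (∀ x1 ∈ Set.Icc (R k) (R (k + 1)), u (x1, g x1) = 0 ∧ u (x1, -(g x1)) = 0) →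
        (∫ x in outletSlice g (R k) (R (k + 1)), (u x) ^ 4) ^ ((1 : ℝ) / 4) ≤
          c * (g (R k)) ^ ((1 : ℝ) / 2) *
            (∫ x in outletSlice g (R k) (R (k + 1)),
              ‖fderivWithin ℝ u (closure (outletSlice g (R k) (R (k + 1)))) x‖ ^ 2) ^
              ((1 : ℝ) / 2) := by
  have hC : (0:ℝ) < 108*L+36 := by linarith
  refine ⟨(108*L+36) ^ ((1:ℝ)/4), Real.rpow_pos_of_pos hC _, ?_⟩
  intro k u hu hvan
  have hRmono : ∀ j, Rstar ≤ R j := by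
    intro j
    induction j with
    | zero => exact hR0
    | succ n ih =>
        rw [hRrec n]
        have hg := hg_pos (R n) ih
        have h2 : 0 < g (R n) / (2*L) := by positivity
        linarith
  have haR : Rstar ≤ R k := hRmono k
  have hg₀ : 0 < g (R k) := hg_pos (R k) haR
  have hba : R (k+1) - R k = g (R k) / (2*L) := by rw [hRrec k]; ring
  have hab : R k < R (k+1) := by
    have h2 : 0 < g (R k) / (2*L) := by positivity
    linarith
  -- the clamped version of g
  set q : ℝ → ℝ := fun t => g (max (R k) (min t (R (k+1)))) with hq
  have hclamp_mem : ∀ t, max (R k) (min t (R (k+1))) ∈ Set.Icc (R k) (R (k+1)) :=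
    fun t => ⟨le_max_left _ _, max_le hab.le (min_le_right t _)⟩
  have hclamp_lip : ∀ s t : ℝ,
      |max (R k) (min s (R (k+1))) - max (R k) (min t (R (k+1)))| ≤ |s - t| := by
    intro s t
    have h1 : |min s (R (k+1)) - min t (R (k+1))| ≤ max |s - t| |R (k+1) - R (k+1)| :=
      abs_min_sub_min_le_max _ _ _ _
    have h2 : |max (R k) (min s (R (k+1))) - max (R k) (min t (R (k+1)))| ≤
        max |R k - R k| |min s (R (k+1)) - min t (R (k+1))| :=
      abs_max_sub_max_le_max _ _ _ _
    have h1' : |min s (R (k+1)) - min t (R (k+1))| ≤ |s - t| :=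
      h1.trans (max_le le_rfl (by simp [abs_nonneg]))
    exact le_trans h2 (max_le (by simp [abs_nonneg]) h1')
  have hq_lip : ∀ s t, |q s - q t| ≤ L * |s - t| := by
    intro s t
    rw [hq]
    refine le_trans (hg_lip _ _ (le_trans haR (hclamp_mem s).1)
      (le_trans haR (hclamp_mem t).1)) ?_
    exact mul_le_mul_of_nonneg_left (hclamp_lip s t) hL.le
  have hq_cont : Continuous q := by
    have hlw : LipschitzWith (Real.toNNReal L) q := by
      refine LipschitzWith.of_dist_le_mul fun s t => ?_
      rw [Real.dist_eq, Real.dist_eq, Real.coe_toNNReal L hL.le]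
      exact hq_lip s t
    exact hlw.continuous
  have hq_eq : ∀ t ∈ Set.Icc (R k) (R (k+1)), q t = g t := by
    intro t htm
    rw [hq]
    simp only
    rw [min_eq_left htm.2, max_eq_right htm.1]
  have hq_lb : ∀ t, g (R k) / 2 ≤ q t := by
    intro t
    have h1 := hg_lip (max (R k) (min t (R (k+1)))) (R k)
      (le_trans haR (hclamp_mem t).1) haR
    have h2 : |max (R k) (min t (R (k+1))) - R k| ≤ R (k+1) - R k := by
      rw [abs_le]
      constructor
      · linarith [(hclamp_mem t).1]
      · linarith [(hclamp_mem t).2]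
    have h3 : L * |max (R k) (min t (R (k+1))) - R k| ≤ L * (R (k+1) - R k) :=
      mul_le_mul_of_nonneg_left h2 hL.le
    have h4 : L * (R (k+1) - R k) = g (R k) / 2 := by
      rw [hba]
      field_simp
    have h5 := (abs_le.1 (le_trans h1 (le_trans h3 (le_of_eq h4)))).1
    rw [hq]
    simp only
    linarith
  have hq_ub : ∀ t, q t ≤ 3/2 * g (R k) := by
    intro t
    have h1 := hg_lip (max (R k) (min t (R (k+1)))) (R k)
      (le_trans haR (hclamp_mem t).1) haR
    have h2 : |max (R k) (min t (R (k+1))) - R k| ≤ R (k+1) - R k := by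
      rw [abs_le]
      constructor
      · linarith [(hclamp_mem t).1]
      · linarith [(hclamp_mem t).2]
    have h3 : L * |max (R k) (min t (R (k+1))) - R k| ≤ L * (R (k+1) - R k) :=
      mul_le_mul_of_nonneg_left h2 hL.le
    have h4 : L * (R (k+1) - R k) = g (R k) / 2 := by
      rw [hba]
      field_simp
    have h5 := (abs_le.1 (le_trans h1 (le_trans h3 (le_of_eq h4)))).2
    rw [hq]
    simp only
    linarith
  have hset : outletSlice g (R k) (R (k+1)) = outletSlice q (R k) (R (k+1)) := by
    ext x
    constructor
    · rintro ⟨h1, h2, h3⟩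
      exact ⟨h1, h2, by rwa [hq_eq x.1 ⟨h1.le, h2.le⟩]⟩
    · rintro ⟨h1, h2, h3⟩
      exact ⟨h1, h2, by rwa [hq_eq x.1 ⟨h1.le, h2.le⟩] at h3⟩
  have hvan' : ∀ x1 ∈ Set.Icc (R k) (R (k+1)), u (x1, q x1) = 0 ∧ u (x1, -(q x1)) = 0 := by
    intro x1 h
    rw [hq_eq x1 h]
    exact hvan x1 h
  have hu' : ContDiffOn ℝ 1 u (closure (outletSlice q (R k) (R (k+1)))) := by
    rw [← hset]
    exact hu
  have key := key_lemma L (g (R k)) (R k) (R (k+1)) q u hL hg₀ hab hba hq_cont hq_lip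
    hq_lb hq_ub hu' hvan'
  rw [← hset] at key
  have hI40 : 0 ≤ ∫ x in outletSlice g (R k) (R (k+1)), u x ^ 4 :=
    integral_nonneg fun x => by positivity
  have hT0 : 0 ≤ ∫ x in outletSlice g (R k) (R (k+1)),
      ‖fderivWithin ℝ u (closure (outletSlice g (R k) (R (k+1)))) x‖ ^ 2 :=
    integral_nonneg fun x => by positivity
  calc (∫ x in outletSlice g (R k) (R (k+1)), u x ^ 4) ^ ((1:ℝ)/4)
      ≤ ((108*L+36) * (g (R k))^2 * (∫ x in outletSlice g (R k) (R (k+1)),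
          ‖fderivWithin ℝ u (closure (outletSlice g (R k) (R (k+1)))) x‖ ^ 2)^2) ^ ((1:ℝ)/4) :=
        Real.rpow_le_rpow hI40 key (by norm_num)
    _ = (108*L+36) ^ ((1:ℝ)/4) * (g (R k)) ^ ((1:ℝ)/2) *
        (∫ x in outletSlice g (R k) (R (k+1)),
          ‖fderivWithin ℝ u (closure (outletSlice g (R k) (R (k+1)))) x‖ ^ 2) ^ ((1:ℝ)/2) := by
        rw [Real.mul_rpow (by positivity) (sq_nonneg _),
          Real.mul_rpow hC.le (sq_nonneg _)]
        congr 1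
        · congr 1
          rw [← Real.rpow_natCast (g (R k)) 2, ← Real.rpow_mul hg₀.le]
          norm_num
        · rw [← Real.rpow_natCast _ 2, ← Real.rpow_mul hT0]
          norm_num
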